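/- For every natural number n ≥ 1, ∑_{i=1}^{n} H_i·H_{n−i} = (n+1)[(H_{n+1}² − H_{n+1}^{(2)}) − 2(H_{n+1} − 1)], where H_k is the k-th harmonic number, H_0 = 0, and H_k^{(2)} is the k-th harmonic number of order 2. -/

import Mathlib

open Finset
noncomputable def H (n : ℕ) : ℝ := ∑ i ∈ Finset.Icc 1 n, (1:ℝ)/i
noncomputable def H2 (n : ℕ) : ℝ := ∑ i ∈ Finset.Icc 1 n, (1:ℝ)/(i:ℝ)^2

lemma H_zero : H 0 = 0 := by simp [H]
lemma H_succ (n : ℕ) : H (n+1) = H n + 1/((n:ℝ)+1) := by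
  rw [H, H, Finset.sum_Icc_succ_top (by omega)]; push_cast; ring
lemma H2_succ (n : ℕ) : H2 (n+1) = H2 n + 1/((n:ℝ)+1)^2 := by
  rw [H2, H2, Finset.sum_Icc_succ_top (by omega)]; push_cast; ring

lemma reflect (m : ℕ) (f : ℕ → ℝ) :
    ∑ j ∈ Icc 1 m, f (m + 1 - j) = ∑ j ∈ Icc 1 m, f j := by
  apply Finset.sum_nbij' (i := fun j => m + 1 - j) (j := fun j => m + 1 - j) <;>
    intros a ha <;> simp only [Finset.mem_Icc] at * <;> first | omega | (congr 1; omega)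

lemma keyA (n : ℕ) :
    ∑ j ∈ Icc 1 (n+1), (1:ℝ)/(j:ℝ) * (1/((n+2-j : ℕ):ℝ))
      = 2 * H (n+1) / ((n:ℝ)+2) := by
  have h1 : ∑ j ∈ Icc 1 (n+1), (1:ℝ)/(j:ℝ) * (1/((n+2-j : ℕ):ℝ))
      = ∑ j ∈ Icc 1 (n+1), (1/((n:ℝ)+2)) * (1/(j:ℝ) + 1/((n+2-j : ℕ):ℝ)) := by
    apply Finset.sum_congr rfl
    intro j hj
    simp only [Finset.mem_Icc] at hj
    have hc : ((n+2-j : ℕ):ℝ) = (n:ℝ)+2-(j:ℝ) := by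
      have : (j:ℝ) ≤ (n:ℝ)+2 := by exact_mod_cast (by omega : j ≤ n+2)
      push_cast [Nat.cast_sub (by omega : j ≤ n+2)]; ring
    have hj0 : (0:ℝ) < (j:ℝ) := by exact_mod_cast (by omega : 0 < j)
    have hb : (0:ℝ) < (n:ℝ)+2-(j:ℝ) := by
      have : (j:ℝ) ≤ (n:ℝ)+1 := by exact_mod_cast hj.2
      linarith
    rw [hc]
    field_simp
    ring
  rw [h1, ← Finset.mul_sum, Finset.sum_add_distrib]
  have h2 : ∑ j ∈ Icc 1 (n+1), (1:ℝ)/((n+2-j : ℕ):ℝ)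
      = ∑ j ∈ Icc 1 (n+1), (1:ℝ)/(j:ℝ) := by
    have := reflect (n+1) (fun j => (1:ℝ)/(j:ℝ))
    simpa using this
  rw [h2]
  have : ∑ j ∈ Icc 1 (n+1), (1:ℝ)/(j:ℝ) = H (n+1) := rfl
  rw [this]; ring

lemma keyB (n : ℕ) :
    ∑ i ∈ Icc 1 n, H i * (1/((n+1-i : ℕ):ℝ)) = (H (n+1))^2 - H2 (n+1) := by
  induction n with
  | zero => simp [H, H2]
  | succ n ih =>
    have e1 : ∑ i ∈ Icc 1 (n+1), H i * (1/((n+1+1-i : ℕ):ℝ))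
        = ∑ j ∈ Icc 1 (n+1), H (n+2-j) * (1/(j:ℝ)) := by
      rw [← reflect (n+1) (fun i => H i * (1/((n+1+1-i : ℕ):ℝ)))]
      apply Finset.sum_congr rfl
      intro j hj
      simp only [Finset.mem_Icc] at hj
      have h1 : n+1+1-j = n+2-j := by omega
      have h2 : n+1+1-(n+1+1-j) = j := by omega
      simp only [h1, h2]
    rw [e1]
    have e2 : ∑ j ∈ Icc 1 (n+1), H (n+2-j) * (1/(j:ℝ))
        = ∑ j ∈ Icc 1 (n+1), (H (n+1-j) * (1/(j:ℝ))
            + (1:ℝ)/(j:ℝ) * (1/((n+2-j : ℕ):ℝ))) := by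
      apply Finset.sum_congr rfl
      intro j hj
      simp only [Finset.mem_Icc] at hj
      have h1 : n+2-j = (n+1-j)+1 := by omega
      have h2 : ((n+1-j : ℕ):ℝ)+1 = ((n+2-j : ℕ):ℝ) := by
        push_cast [Nat.cast_sub (by omega : j ≤ n+1), Nat.cast_sub (by omega : j ≤ n+2)]
        ring
      rw [h1, H_succ, ← h1, h2]
      ring
    rw [e2, Finset.sum_add_distrib, keyA]
    have e3 : ∑ j ∈ Icc 1 (n+1), H (n+1-j) * (1/(j:ℝ))
        = ∑ i ∈ Icc 1 n, H i * (1/((n+1-i : ℕ):ℝ)) := by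
      rw [Finset.sum_Icc_succ_top (by omega : 1 ≤ n+1)]
      have h0 : H (n+1-(n+1)) = 0 := by
        have : n+1-(n+1) = 0 := by omega
        rw [this, H_zero]
      rw [h0, zero_mul, add_zero]
      rw [← reflect n (fun i => H i * (1/((n+1-i : ℕ):ℝ)))]
      apply Finset.sum_congr rfl
      intro j hj
      simp only [Finset.mem_Icc] at hj
      have h2 : n+1-(n+1-j) = j := by omega
      simp only [h2]
    rw [e3, ih]
    have hrw : (n:ℕ)+2 = (n+1)+1 := rfl
    rw [hrw, H_succ (n+1), H2_succ (n+1)]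
    have hne : ((n:ℝ)+1)+1 ≠ 0 := by positivity
    push_cast
    field_simp
    ring

theorem stmt8 (n : ℕ) (hn : 1 ≤ n) :
    ∑ i ∈ Icc 1 n, H i * H (n-i)
      = ((n:ℝ)+1)*(((H (n+1))^2 - H2 (n+1)) - 2*(H (n+1) - 1)) := by
  clear hn
  induction n with
  | zero => simp [H, H2]
  | succ n ih =>
    rw [Finset.sum_Icc_succ_top (by omega : 1 ≤ n+1)]
    have h0 : H (n+1-(n+1)) = 0 := by
      have : n+1-(n+1) = 0 := by omega
      rw [this, H_zero]
    rw [h0, mul_zero, add_zero]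
    have e1 : ∑ i ∈ Icc 1 n, H i * H (n+1-i)
        = ∑ i ∈ Icc 1 n, (H i * H (n-i) + H i * (1/((n+1-i : ℕ):ℝ))) := by
      apply Finset.sum_congr rfl
      intro i hi
      simp only [Finset.mem_Icc] at hi
      have h1 : n+1-i = (n-i)+1 := by omega
      have h2 : ((n-i : ℕ):ℝ)+1 = ((n+1-i : ℕ):ℝ) := by
        push_cast [Nat.cast_sub (by omega : i ≤ n), Nat.cast_sub (by omega : i ≤ n+1)]
        ring
      rw [h1, H_succ, h2]
      ring_nf
      rw [show 1+n-i = 1+(n-i) from by omega]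
    rw [e1, Finset.sum_add_distrib, ih, keyB]
    have hrw : (n:ℕ)+1+1 = (n+1)+1 := rfl
    rw [hrw, H_succ (n+1), H2_succ (n+1)]
    have hne : ((n:ℝ)+1)+1 ≠ 0 := by positivity
    push_cast
    field_simp
    ring
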